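/- For x ∈ H and v ∈ ℝ², the differential of h(x) = ((4-|x|²)/(|x|²+4x₂+4), 4x₁/(|x|²+4x₂+4)) at x satisfies |Dh_x(v)| = 4|v|/(|x|²+4x₂+4). -/

import Mathlib

noncomputable section

open Complex

/-- The Euclidean plane. -/
abbrev E2 := EuclideanSpace ℝ (Fin 2)

/-- The open unit disk. -/
def Dset : Set E2 := {x | ‖x‖ < 1}

/-- The upper half plane. -/
def Hset : Set E2 := {x | x 1 > 0}

/-- h(x) = ((4-|x|²)/(|x|²+4x₂+4), 4x₁/(|x|²+4x₂+4)). -/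
def hHP (x : E2) : E2 := !₂[(4 - ‖x‖ ^ 2) / (‖x‖ ^ 2 + 4 * x 1 + 4), 4 * x 0 / (‖x‖ ^ 2 + 4 * x 1 + 4)]

noncomputable def φC : ℂ ≃ₗᵢ[ℝ] E2 := Complex.orthonormalBasisOneI.repr

def fC (z : ℂ) : ℂ := (2*I - z) / (z + 2*I)

lemma norm_sq_eq (x : E2) : ‖x‖ ^ 2 = x 0 ^ 2 + x 1 ^ 2 := by
  rw [EuclideanSpace.norm_eq, Real.sq_sqrt (by positivity)]
  simp [Fin.sum_univ_two, sq_abs]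

lemma hHP_eq (x : E2) : hHP x = φC (fC (φC.symm x)) := by
  have hsymm : φC.symm x = x 0 + x 1 * I := Complex.orthonormalBasisOneI_repr_symm_apply x
  have hns : Complex.normSq ((x 0 + x 1 * I) + 2*I) = ‖x‖ ^ 2 + 4 * x 1 + 4 := by
    simp [Complex.normSq_apply, norm_sq_eq]; ring
  have : fC (φC.symm x) = ⟨(4 - ‖x‖ ^ 2) / (‖x‖ ^ 2 + 4 * x 1 + 4), 4 * x 0 / (‖x‖ ^ 2 + 4 * x 1 + 4)⟩ := by
    rw [hsymm]
    unfold fC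
    apply Complex.ext
    · rw [Complex.div_re, hns]
      simp [norm_sq_eq]
      ring
    · rw [Complex.div_im, hns]
      simp [norm_sq_eq]
      ring
  rw [this]
  show hHP x = Complex.orthonormalBasisOneI.repr _
  ext i; fin_cases i <;> simp [hHP, Complex.orthonormalBasisOneI_repr_apply]

lemma fC_hasDerivAt {z : ℂ} (hz : z + 2*I ≠ 0) :
    HasDerivAt fC (-4*I / (z + 2*I)^2) z := by
  have h1 : HasDerivAt (fun z : ℂ => 2*I - z) (-1) z := by
    simpa using (hasDerivAt_id' z).const_sub (2*I)
  have h2 : HasDerivAt (fun z : ℂ => z + 2*I) 1 z := by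
    simpa using (hasDerivAt_id z).add_const (2*I)
  have := h1.div h2 hz
  exact this.congr_deriv (by ring)

theorem norm_fderiv_hHP (x : E2) (hx : x ∈ Hset) (v : E2) :
    ‖fderiv ℝ hHP x v‖ = 4 * ‖v‖ / (‖x‖ ^ 2 + 4 * x 1 + 4) := by
  set z := φC.symm x with hzdef
  have hzval : z = x 0 + x 1 * I := Complex.orthonormalBasisOneI_repr_symm_apply x
  have hz : z + 2*I ≠ 0 := by
    intro h
    have h2 : (z + 2*I).im = 0 := by rw [h]; rfl
    rw [hzval] at h2
    simp at h2
    have := hx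
    simp [Hset] at this
    linarith
  have hd := (fC_hasDerivAt hz).hasFDerivAt.restrictScalars ℝ
  have hcomp : HasFDerivAt hHP
      ((φC.toContinuousLinearEquiv.toContinuousLinearMap).comp
        (((ContinuousLinearMap.smulRight (1 : ℂ →L[ℂ] ℂ) (-4*I / (z + 2*I)^2)).restrictScalars ℝ).comp
          (φC.symm.toContinuousLinearEquiv.toContinuousLinearMap))) x := by
    have h1 : HasFDerivAt (φC.symm : E2 → ℂ) φC.symm.toContinuousLinearEquiv.toContinuousLinearMap x :=
      φC.symm.toContinuousLinearEquiv.toContinuousLinearMap.hasFDerivAt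
    have h2 : HasFDerivAt (φC : ℂ → E2) φC.toContinuousLinearEquiv.toContinuousLinearMap (fC z) :=
      φC.toContinuousLinearEquiv.toContinuousLinearMap.hasFDerivAt
    have := (h2.comp x ((hd.comp x h1)))
    rw [show hHP = φC ∘ fC ∘ φC.symm from funext hHP_eq]
    exact this
  rw [hcomp.fderiv]
  have happ : ((φC.toContinuousLinearEquiv.toContinuousLinearMap).comp
        (((ContinuousLinearMap.smulRight (1 : ℂ →L[ℂ] ℂ) (-4*I / (z + 2*I)^2)).restrictScalars ℝ).comp
          (φC.symm.toContinuousLinearEquiv.toContinuousLinearMap))) v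
      = φC (φC.symm v * (-4*I / (z + 2*I)^2)) := rfl
  rw [happ, φC.norm_map, norm_mul, φC.symm.norm_map]
  have hns : Complex.normSq (z + 2*I) = ‖x‖ ^ 2 + 4 * x 1 + 4 := by
    rw [hzval]
    simp [Complex.normSq_apply, norm_sq_eq]; ring
  have habs : ‖(-4*I / (z + 2*I)^2 : ℂ)‖ = 4 / (‖x‖ ^ 2 + 4 * x 1 + 4) := by
    rw [norm_div, norm_pow, Complex.sq_norm, hns]
    norm_num
  rw [habs]; ring
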